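/- Let X(ℝⁿ) be a translation-invariant Banach function space. Then there exist constants C₁, C₂ > 0 such that for all R > 0 and all y ∈ ℝⁿ: C₁ · min{1, Rⁿ} ≤ ‖χ_{B(y,R)}‖_X ≤ C₂ · max{1, Rⁿ}. -/

import Mathlib

open MeasureTheory Filter ENNReal Metric

noncomputable section

/-- A Banach function norm on measurable functions over a measure space `α`,
following Bennett–Sharpley: axioms (A1)–(A5). -/
structure BanachFunctionNorm (α : Type) [MeasureSpace α] where
  ρ : (α → ℝ≥0∞) → ℝ≥0∞
  ρ_zero : ∀ f, ρ f = 0 ↔ f =ᵐ[volume] 0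
  ρ_smul : ∀ (a : NNReal) (f : α → ℝ≥0∞), ρ (fun x => (a : ℝ≥0∞) * f x) = a * ρ f
  ρ_add : ∀ f g, ρ (fun x => f x + g x) ≤ ρ f + ρ g
  ρ_mono : ∀ f g, (∀ᵐ x ∂volume, f x ≤ g x) → ρ f ≤ ρ g
  ρ_fatou : ∀ (f : ℕ → α → ℝ≥0∞),
      (∀ j, ∀ᵐ x ∂volume, f j x ≤ f (j+1) x) →
      ρ (fun x => ⨆ j, f j x) = ⨆ j, ρ (f j)
  ρ_finite : ∀ E : Set α, MeasurableSet E → volume E < ⊤ → ρ (E.indicator 1) < ⊤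
  ρ_loc_embed : ∀ E : Set α, MeasurableSet E → volume E < ⊤ →
      ∃ C : ℝ≥0∞, C < ⊤ ∧ ∀ f : α → ℝ≥0∞, ∫⁻ x in E, f x ∂volume ≤ C * ρ f

/-- The associate (Köthe dual) norm of a Banach function norm. -/
def BanachFunctionNorm.associate {α : Type} [MeasureSpace α]
    (X : BanachFunctionNorm α) (g : α → ℝ≥0∞) : ℝ≥0∞ :=
  ⨆ f ∈ {f : α → ℝ≥0∞ | X.ρ f ≤ 1}, ∫⁻ x, f x * g x ∂volume

/-- Finite subadditivity of a Banach function norm. -/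
lemma BanachFunctionNorm.rho_sum_le {α : Type} [MeasureSpace α]
    (X : BanachFunctionNorm α) {ι : Type*} (s : Finset ι) (f : ι → α → ℝ≥0∞) :
    X.ρ (fun x => ∑ i ∈ s, f i x) ≤ ∑ i ∈ s, X.ρ (f i) := by
  classical
  induction s using Finset.induction with
  | empty =>
      simp only [Finset.sum_empty]
      have h0 : X.ρ (fun _ : α => (0 : ℝ≥0∞)) = 0 :=
        (X.ρ_zero _).mpr (Filter.Eventually.of_forall fun _ => rfl)
      exact le_of_eq h0
  | insert i s hnotmem ih =>
      have h1 : X.ρ (fun x => f i x + ∑ j ∈ s, f j x) ≤ X.ρ (f i) + X.ρ (fun x => ∑ j ∈ s, f j x) :=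
        X.ρ_add _ _
      calc X.ρ (fun x => ∑ j ∈ insert i s, f j x)
          = X.ρ (fun x => f i x + ∑ j ∈ s, f j x) := by
            congr 1; funext x; rw [Finset.sum_insert hnotmem]
        _ ≤ X.ρ (f i) + X.ρ (fun x => ∑ j ∈ s, f j x) := h1
        _ ≤ X.ρ (f i) + ∑ j ∈ s, X.ρ (f j) := add_le_add_right ih _
        _ = ∑ j ∈ insert i s, X.ρ (f j) := by rw [Finset.sum_insert hnotmem]

/-- Translation invariance implies the norm of a ball indicator only depends on the radius. -/
lemma rho_ball_translate {n : ℕ} (X : BanachFunctionNorm (EuclideanSpace ℝ (Fin n)))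
    (hTI : ∀ (y : EuclideanSpace ℝ (Fin n)) (f : EuclideanSpace ℝ (Fin n) → ℝ≥0∞),
        X.ρ (fun x => f (x - y)) = X.ρ f)
    (y : EuclideanSpace ℝ (Fin n)) (a : ℝ) :
    X.ρ ((Metric.ball y a).indicator 1) = X.ρ ((Metric.ball (0 : EuclideanSpace ℝ (Fin n)) a).indicator 1) := by
  have h := hTI y ((Metric.ball (0 : EuclideanSpace ℝ (Fin n)) a).indicator 1)
  have heq : (fun x => (Metric.ball (0 : EuclideanSpace ℝ (Fin n)) a).indicator 1 (x - y))
      = (Metric.ball y a).indicator (1 : EuclideanSpace ℝ (Fin n) → ℝ≥0∞) := by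
    funext x
    have hiff : x - y ∈ Metric.ball (0 : EuclideanSpace ℝ (Fin n)) a ↔ x ∈ Metric.ball y a := by
      rw [mem_ball_zero_iff, Metric.mem_ball, dist_eq_norm]
    by_cases hx : x ∈ Metric.ball y a
    · rw [Set.indicator_of_mem hx, Set.indicator_of_mem (hiff.mpr hx)]; rfl
    · rw [Set.indicator_of_notMem hx, Set.indicator_of_notMem (fun h => hx (hiff.mp h))]
  rw [heq] at h
  exact h

/-- Grid covering of a ball by balls of radius `a`. -/
lemma grid_cover (n : ℕ) {r a : ℝ} (hr : 0 < r) (ha : 0 < a) :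
    ∃ s : Finset (EuclideanSpace ℝ (Fin n)),
      s.card ≤ (2 * ⌈r * Real.sqrt n / a⌉₊ + 1) ^ n ∧
      Metric.ball (0 : EuclideanSpace ℝ (Fin n)) r ⊆ ⋃ z ∈ s, Metric.ball z a := by
  classical
  rcases Nat.eq_zero_or_pos n with hn | hn
  · subst hn
    refine ⟨{0}, by simp, fun x _ => ?_⟩
    refine Set.mem_iUnion₂.mpr ⟨0, Finset.mem_singleton_self 0, ?_⟩
    have hx0 : x = 0 := Subsingleton.elim x 0
    simp [Metric.mem_ball, hx0, ha]
  · set m := ⌈r * Real.sqrt n / a⌉₊ with hm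
    set sn := Real.sqrt n with hsn
    have hsn0 : 0 < sn := Real.sqrt_pos.mpr (by exact_mod_cast hn)
    have hsnsq : sn ^ 2 = n := Real.sq_sqrt (by positivity)
    set T : Finset (Fin n → ℤ) := Fintype.piFinset fun _ => Finset.Icc (-(m : ℤ)) (m : ℤ) with hT
    set z : (Fin n → ℤ) → EuclideanSpace ℝ (Fin n) :=
      fun v => WithLp.toLp 2 (fun i => a / sn * (v i : ℝ)) with hz
    refine ⟨T.image z, ?_, ?_⟩
    · calc (T.image z).card ≤ T.card := Finset.card_image_le
        _ = (2 * m + 1) ^ n := by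
            rw [hT, Fintype.card_piFinset]
            have hcard : (Finset.Icc (-(m : ℤ)) (m : ℤ)).card = 2 * m + 1 := by
              rw [Int.card_Icc]; omega
            simp [hcard]
    · intro x hx
      have hxr : ‖x‖ < r := mem_ball_zero_iff.mp hx
      have hcoord : ∀ i, |x i| ≤ ‖x‖ := by
        intro i
        have h2 : ‖x i‖ ^ 2 ≤ ∑ j, ‖x j‖ ^ 2 :=
          Finset.single_le_sum (f := fun j => ‖x j‖ ^ 2) (fun j _ => sq_nonneg _)
            (Finset.mem_univ i)
        calc |x i| = Real.sqrt (‖x i‖ ^ 2) := by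
              rw [Real.sqrt_sq (norm_nonneg _)]; exact (Real.norm_eq_abs _).symm
          _ ≤ Real.sqrt (∑ j, ‖x j‖ ^ 2) := Real.sqrt_le_sqrt h2
          _ = ‖x‖ := (EuclideanSpace.norm_eq x).symm
      set v : Fin n → ℤ := fun i => round (x i * sn / a) with hv
      have hvT : v ∈ T := by
        rw [hT, Fintype.mem_piFinset]
        intro i
        rw [Finset.mem_Icc, ← abs_le]
        have hround : |x i * sn / a - (v i : ℝ)| ≤ 1 / 2 := abs_sub_round _
        have habs : |(v i : ℝ)| ≤ |x i * sn / a| + 1 / 2 := by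
          have := abs_sub_abs_le_abs_sub ((v i : ℝ)) (x i * sn / a)
          rw [abs_sub_comm] at this
          linarith
        have hxia : |x i * sn / a| ≤ r * sn / a := by
          rw [abs_div, abs_mul, abs_of_pos hsn0, abs_of_pos ha]
          gcongr
          exact le_of_lt (lt_of_le_of_lt (hcoord i) hxr)
        have hmle : r * sn / a ≤ (m : ℝ) := Nat.le_ceil _
        have hlt : |(v i : ℝ)| < (m : ℝ) + 1 := by linarith
        have hlt2 : |v i| < (m : ℤ) + 1 := by exact_mod_cast hlt
        omega
      refine Set.mem_iUnion₂.mpr ⟨z v, Finset.mem_image_of_mem z hvT, ?_⟩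
      rw [Metric.mem_ball]
      have hcd : ∀ i, dist (x i) (z v i) ≤ a / (2 * sn) := by
        intro i
        have hzvi : z v i = a / sn * (v i : ℝ) := rfl
        have heq2 : x i - a / sn * (v i : ℝ) = a / sn * (x i * sn / a - (v i : ℝ)) := by
          field_simp
        rw [Real.dist_eq, hzvi, heq2, abs_mul, abs_of_pos (by positivity : (0:ℝ) < a / sn)]
        have := abs_sub_round (x i * sn / a)
        calc a / sn * |x i * sn / a - (v i : ℝ)| ≤ a / sn * (1 / 2) := by gcongr
          _ = a / (2 * sn) := by ring
      have hsum : ∑ i, dist (x i) (z v i) ^ 2 ≤ (a / 2) ^ 2 := by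
        calc ∑ i, dist (x i) (z v i) ^ 2 ≤ ∑ _i : Fin n, (a / (2 * sn)) ^ 2 :=
              Finset.sum_le_sum fun i _ => by
                have h := hcd i
                have h0 : (0:ℝ) ≤ dist (x i) (z v i) := dist_nonneg
                nlinarith
          _ = (n : ℝ) * (a / (2 * sn)) ^ 2 := by
              rw [Finset.sum_const, Finset.card_univ, Fintype.card_fin, nsmul_eq_mul]
          _ = (a / 2) ^ 2 := by
              rw [← hsnsq]; field_simp
      calc dist x (z v) = Real.sqrt (∑ i, dist (x i) (z v i) ^ 2) := EuclideanSpace.dist_eq x _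
        _ ≤ Real.sqrt ((a / 2) ^ 2) := Real.sqrt_le_sqrt hsum
        _ = a / 2 := Real.sqrt_sq (by positivity)
        _ < a := by linarith

/-- If `B(0,r)` is covered by `card`-many balls of radius `a`, then the norm of the
indicator of any ball of radius `r` is at most `card` times that of radius `a`. -/
lemma rho_ball_le {n : ℕ} (X : BanachFunctionNorm (EuclideanSpace ℝ (Fin n)))
    (hTI : ∀ (y : EuclideanSpace ℝ (Fin n)) (f : EuclideanSpace ℝ (Fin n) → ℝ≥0∞),
        X.ρ (fun x => f (x - y)) = X.ρ f)
    {r a : ℝ} (y : EuclideanSpace ℝ (Fin n))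
    (s : Finset (EuclideanSpace ℝ (Fin n)))
    (hcov : Metric.ball (0 : EuclideanSpace ℝ (Fin n)) r ⊆ ⋃ z ∈ s, Metric.ball z a) :
    X.ρ ((Metric.ball y r).indicator 1)
      ≤ s.card * X.ρ ((Metric.ball (0 : EuclideanSpace ℝ (Fin n)) a).indicator 1) := by
  classical
  have hpt : ∀ x, (Metric.ball y r).indicator (1 : EuclideanSpace ℝ (Fin n) → ℝ≥0∞) x
      ≤ ∑ w ∈ s, (Metric.ball (y + w) a).indicator (1 : EuclideanSpace ℝ (Fin n) → ℝ≥0∞) x := by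
    intro x
    by_cases hx : x ∈ Metric.ball y r
    · have hxy : x - y ∈ Metric.ball (0 : EuclideanSpace ℝ (Fin n)) r := by
        rw [mem_ball_zero_iff, ← dist_eq_norm]
        exact Metric.mem_ball.mp hx
      obtain ⟨w, hws, hw⟩ := Set.mem_iUnion₂.mp (hcov hxy)
      have hxw : x ∈ Metric.ball (y + w) a := by
        rw [Metric.mem_ball, dist_eq_norm]
        have : x - (y + w) = x - y - w := by abel
        rw [this, ← dist_eq_norm]
        exact Metric.mem_ball.mp hw
      rw [Set.indicator_of_mem hx]
      calc (1 : EuclideanSpace ℝ (Fin n) → ℝ≥0∞) x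
          = (Metric.ball (y + w) a).indicator (1 : EuclideanSpace ℝ (Fin n) → ℝ≥0∞) x := by
            rw [Set.indicator_of_mem hxw]
        _ ≤ ∑ w ∈ s, (Metric.ball (y + w) a).indicator (1 : EuclideanSpace ℝ (Fin n) → ℝ≥0∞) x :=
            Finset.single_le_sum (f := fun w => (Metric.ball (y + w) a).indicator (1 : EuclideanSpace ℝ (Fin n) → ℝ≥0∞) x)
              (fun _ _ => zero_le) hws
    · rw [Set.indicator_of_notMem hx]
      exact zero_le
  calc X.ρ ((Metric.ball y r).indicator 1)
      ≤ X.ρ (fun x => ∑ w ∈ s, (Metric.ball (y + w) a).indicator (1 : EuclideanSpace ℝ (Fin n) → ℝ≥0∞) x) :=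
        X.ρ_mono _ _ (Filter.Eventually.of_forall hpt)
    _ ≤ ∑ w ∈ s, X.ρ ((Metric.ball (y + w) a).indicator (1 : EuclideanSpace ℝ (Fin n) → ℝ≥0∞)) :=
        X.rho_sum_le s _
    _ = ∑ _w ∈ s, X.ρ ((Metric.ball (0 : EuclideanSpace ℝ (Fin n)) a).indicator 1) :=
        Finset.sum_congr rfl fun w _ => rho_ball_translate X hTI (y + w) a
    _ = s.card * X.ρ ((Metric.ball (0 : EuclideanSpace ℝ (Fin n)) a).indicator 1) := by
        rw [Finset.sum_const, nsmul_eq_mul]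

lemma max_one_pow_ennreal (b : ℝ≥0∞) (n : ℕ) : max 1 b ^ n = max 1 (b ^ n) := by
  rcases le_total b 1 with h | h
  · rw [max_eq_left h, one_pow, max_eq_left (pow_le_one' h n)]
  · rw [max_eq_right h, max_eq_right (one_le_pow_of_one_le' h n)]

/-- In a translation-invariant Banach function space on ℝⁿ, there are constants
`C₁, C₂ > 0` with `C₁ min{1,Rⁿ} ≤ ‖χ_{B(y,R)}‖_X ≤ C₂ max{1,Rⁿ}` for all `R > 0`, `y`. -/
theorem translationInvariant_ball_norm_two_sided_estimate {n : ℕ}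
    (X : BanachFunctionNorm (EuclideanSpace ℝ (Fin n)))
    (hTI : ∀ (y : EuclideanSpace ℝ (Fin n)) (f : EuclideanSpace ℝ (Fin n) → ℝ≥0∞),
        X.ρ (fun x => f (x - y)) = X.ρ f) :
    ∃ C₁ C₂ : ℝ≥0∞, 0 < C₁ ∧ C₂ < ⊤ ∧ ∀ R : ℝ, 0 < R → ∀ y : EuclideanSpace ℝ (Fin n),
      C₁ * min 1 (ENNReal.ofReal R ^ n) ≤ X.ρ ((Metric.ball y R).indicator 1) ∧
      X.ρ ((Metric.ball y R).indicator 1) ≤ C₂ * max 1 (ENNReal.ofReal R ^ n) := by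
  classical
  set E := EuclideanSpace ℝ (Fin n)
  set c : ℝ≥0∞ := X.ρ ((Metric.ball (0 : E) 1).indicator 1) with hc
  have hc0 : c ≠ 0 := by
    intro h
    have hae := (X.ρ_zero _).mp h
    have hmeas : volume {x : E | (Metric.ball (0 : E) 1).indicator (1 : E → ℝ≥0∞) x ≠ 0} = 0 := by
      rw [Filter.EventuallyEq, ae_iff] at hae
      simpa using hae
    have hset : {x : E | (Metric.ball (0 : E) 1).indicator (1 : E → ℝ≥0∞) x ≠ 0}
        = Metric.ball (0 : E) 1 := by
      ext x
      simp only [Set.mem_setOf_eq]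
      constructor
      · intro hne
        by_contra hx
        exact hne (Set.indicator_of_notMem hx _)
      · intro hx
        rw [Set.indicator_of_mem hx]
        simp
    rw [hset] at hmeas
    exact absurd hmeas (ne_of_gt (measure_ball_pos volume (0 : E) one_pos))
  have hcT : c < ⊤ :=
    X.ρ_finite _ measurableSet_ball measure_ball_lt_top
  set K : ℝ := 2 * Real.sqrt n + 3 with hK
  have hK3 : (3 : ℝ) ≤ K := by
    have := Real.sqrt_nonneg (n : ℝ); linarith
  have hK0 : 0 < K := by linarith
  set Kp : ℝ≥0∞ := ENNReal.ofReal K ^ n with hKp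
  have hKp0 : Kp ≠ 0 := by
    apply pow_ne_zero
    simp only [ne_eq, ENNReal.ofReal_eq_zero, not_le]
    linarith
  have hKpT : Kp ≠ ⊤ := by
    apply pow_ne_top
    exact ENNReal.ofReal_ne_top
  have hKp1 : 1 ≤ Kp := by
    apply one_le_pow_of_one_le'
    rw [← ENNReal.ofReal_one]
    exact ENNReal.ofReal_le_ofReal (by linarith)
  refine ⟨c / Kp, Kp * c, ?_, ?_, ?_⟩
  · exact ENNReal.div_pos hc0 hKpT
  · exact ENNReal.mul_lt_top (lt_top_iff_ne_top.mpr hKpT) hcT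
  intro R hR y
  constructor
  · -- lower bound
    rcases le_total R 1 with hR1 | hR1
    · -- R ≤ 1 : cover B(0,1) by balls of radius R
      obtain ⟨s, hcard, hcov⟩ := grid_cover n one_pos hR
      have hkey : c ≤ s.card * X.ρ ((Metric.ball (0 : E) R).indicator 1) := by
        have := rho_ball_le X hTI (0 : E) s hcov
        calc c = X.ρ ((Metric.ball (0 : E) 1).indicator 1) := rfl
          _ ≤ _ := this
      -- (s.card : ℝ≥0∞) * (ofReal R)^n ≤ Kp
      set m := ⌈1 * Real.sqrt n / R⌉₊ with hm
      have hreal : ((2 * m + 1 : ℕ) : ℝ) * R ≤ K := by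
        have hm1 : (m : ℝ) < Real.sqrt n / R + 1 := by
          rw [hm, one_mul]
          exact Nat.ceil_lt_add_one (by positivity)
        have hRne : R ≠ 0 := ne_of_gt hR
        push_cast
        have h1 : (m : ℝ) * R < Real.sqrt n + R := by
          have := mul_lt_mul_of_pos_right hm1 hR
          rwa [add_mul, div_mul_cancel₀ _ hRne, one_mul] at this
        nlinarith
      have hcast : (s.card : ℝ≥0∞) * ENNReal.ofReal R ^ n ≤ Kp := by
        have h1 : (s.card : ℝ≥0∞) ≤ ((2 * m + 1 : ℕ) : ℝ≥0∞) ^ n := by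
          calc (s.card : ℝ≥0∞) ≤ (((2 * m + 1) ^ n : ℕ) : ℝ≥0∞) := by exact_mod_cast hcard
            _ = ((2 * m + 1 : ℕ) : ℝ≥0∞) ^ n := by push_cast; ring
        calc (s.card : ℝ≥0∞) * ENNReal.ofReal R ^ n
            ≤ ((2 * m + 1 : ℕ) : ℝ≥0∞) ^ n * ENNReal.ofReal R ^ n :=
              mul_le_mul_left h1 _
          _ = (((2 * m + 1 : ℕ) : ℝ≥0∞) * ENNReal.ofReal R) ^ n := (mul_pow _ _ n).symm
          _ = (ENNReal.ofReal (((2 * m + 1 : ℕ) : ℝ) * R)) ^ n := by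
              rw [ENNReal.ofReal_mul (by positivity), ENNReal.ofReal_natCast]
          _ ≤ (ENNReal.ofReal K) ^ n := by
              gcongr
      have hmin : min 1 (ENNReal.ofReal R ^ n) = ENNReal.ofReal R ^ n := by
        apply min_eq_right
        apply pow_le_one'
        rw [← ENNReal.ofReal_one]
        exact ENNReal.ofReal_le_ofReal hR1
      rw [hmin]
      have hKpinv : Kp * Kp⁻¹ = 1 := ENNReal.mul_inv_cancel hKp0 hKpT
      calc c / Kp * ENNReal.ofReal R ^ n
          ≤ (s.card * X.ρ ((Metric.ball (0 : E) R).indicator 1)) / Kp * ENNReal.ofReal R ^ n := by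
            gcongr
        _ = (s.card * ENNReal.ofReal R ^ n) * Kp⁻¹ * X.ρ ((Metric.ball (0 : E) R).indicator 1) := by
            rw [ENNReal.div_eq_inv_mul]; ring
        _ ≤ Kp * Kp⁻¹ * X.ρ ((Metric.ball (0 : E) R).indicator 1) := by
            gcongr
        _ = X.ρ ((Metric.ball (0 : E) R).indicator 1) := by rw [hKpinv, one_mul]
        _ = X.ρ ((Metric.ball y R).indicator 1) := (rho_ball_translate X hTI y R).symm
    · -- 1 ≤ R : B(y,1) ⊆ B(y,R)
      have hmono : X.ρ ((Metric.ball y 1).indicator 1) ≤ X.ρ ((Metric.ball y R).indicator 1) := by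
        apply X.ρ_mono
        apply Filter.Eventually.of_forall
        intro x
        exact Set.indicator_le_indicator_of_subset (Metric.ball_subset_ball hR1)
          (fun _ => zero_le) x
      calc c / Kp * min 1 (ENNReal.ofReal R ^ n) ≤ c / Kp * 1 :=
            mul_le_mul_right (min_le_left _ _) _
        _ = c * Kp⁻¹ := by rw [mul_one, ENNReal.div_eq_inv_mul, mul_comm]
        _ ≤ c * 1 := mul_le_mul_right (ENNReal.inv_le_one.mpr hKp1) _
        _ = X.ρ ((Metric.ball y 1).indicator 1) := by
            rw [mul_one, hc, rho_ball_translate X hTI y 1]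
        _ ≤ _ := hmono
  · -- upper bound
    obtain ⟨s, hcard, hcov⟩ := grid_cover n hR one_pos
    have hkey : X.ρ ((Metric.ball y R).indicator 1) ≤ s.card * c :=
      rho_ball_le X hTI y s hcov
    set m := ⌈R * Real.sqrt n / 1⌉₊ with hm
    have hreal : ((2 * m + 1 : ℕ) : ℝ) ≤ K * max 1 R := by
      have hm1 : (m : ℝ) < R * Real.sqrt n + 1 := by
        rw [hm, div_one]
        exact Nat.ceil_lt_add_one (by positivity)
      have hmax1 : (1 : ℝ) ≤ max 1 R := le_max_left _ _
      have hmaxR : R ≤ max 1 R := le_max_right _ _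
      have hsn : (0:ℝ) ≤ Real.sqrt n := Real.sqrt_nonneg _
      push_cast
      nlinarith
    have hcast : (s.card : ℝ≥0∞) ≤ Kp * max 1 (ENNReal.ofReal R ^ n) := by
      have h1 : (s.card : ℝ≥0∞) ≤ ((2 * m + 1 : ℕ) : ℝ≥0∞) ^ n := by
        calc (s.card : ℝ≥0∞) ≤ (((2 * m + 1) ^ n : ℕ) : ℝ≥0∞) := by exact_mod_cast hcard
          _ = ((2 * m + 1 : ℕ) : ℝ≥0∞) ^ n := by push_cast; ring
      have h2 : ((2 * m + 1 : ℕ) : ℝ≥0∞) ≤ ENNReal.ofReal (K * max 1 R) := by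
        rw [← ENNReal.ofReal_natCast]
        exact ENNReal.ofReal_le_ofReal hreal
      have h3 : ENNReal.ofReal (K * max 1 R) = ENNReal.ofReal K * max 1 (ENNReal.ofReal R) := by
        rw [ENNReal.ofReal_mul (le_of_lt hK0)]
        congr 1
        rcases le_total (1:ℝ) R with h | h
        · have h' : (1 : ℝ≥0∞) ≤ ENNReal.ofReal R := by
            rw [← ENNReal.ofReal_one]; exact ENNReal.ofReal_le_ofReal h
          rw [max_eq_right h, max_eq_right h']
        · have h' : ENNReal.ofReal R ≤ 1 := by
            rw [← ENNReal.ofReal_one]; exact ENNReal.ofReal_le_ofReal h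
          rw [max_eq_left h, max_eq_left h', ENNReal.ofReal_one]
      calc (s.card : ℝ≥0∞) ≤ ((2 * m + 1 : ℕ) : ℝ≥0∞) ^ n := h1
        _ ≤ (ENNReal.ofReal K * max 1 (ENNReal.ofReal R)) ^ n := by
            rw [← h3]; gcongr
        _ = Kp * (max 1 (ENNReal.ofReal R)) ^ n := by rw [mul_pow]
        _ = Kp * max 1 (ENNReal.ofReal R ^ n) := by rw [max_one_pow_ennreal]
    calc X.ρ ((Metric.ball y R).indicator 1) ≤ s.card * c := hkey
      _ ≤ (Kp * max 1 (ENNReal.ofReal R ^ n)) * c := mul_le_mul_left hcast _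
      _ = Kp * c * max 1 (ENNReal.ofReal R ^ n) := by ring
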